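/- (Linear optimization over the intersection of an ellipsoid and the simplex.) Let P ∈ 𝒫°, let A be a symmetric positive definite real d×d matrix, let σ := √λ_min(A) where λ_min(A) is the smallest eigenvalue of A, let l ∈ ℝ^d, let e := (1,…,1)ᵀ ∈ ℝ^d, and let α > 0 satisfy √α < σ · min_{i∈Σ} min(P(i), 1−P(i)). If l is not a scalar multiple of e, then sup{ lᵀP' : P' ∈ 𝒫, (P'−P)ᵀA(P'−P) ≤ α } = lᵀ( P + √(α/γ)·( A⁻¹l − ((eᵀA⁻¹l)/(eᵀA⁻¹e))·A⁻¹e ) ), where γ := lᵀA⁻¹l − (eᵀA⁻¹l)²/(eᵀA⁻¹e). -/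

import Mathlib

open Filter Asymptotics

namespace DDO

/-- The probability simplex `𝒫` over the scenario set `Σ = Fin d`. -/
def simplex (d : ℕ) : Set (Fin d → ℝ) :=
  {P | (∀ i, 0 ≤ P i) ∧ ∑ i, P i = 1}

/-- The relative interior `𝒫°` of the probability simplex. -/
def simplexInt (d : ℕ) : Set (Fin d → ℝ) :=
  {P | (∀ i, 0 < P i) ∧ ∑ i, P i = 1}

/-- Expected cost `c(x, P) = ∑ i, ℓ(x, i) · P(i)` (extended linearly to `ℝ^d`). -/
noncomputable def cost {X : Type*} {d : ℕ} (ℓ : X → Fin d → ℝ) (x : X)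
    (P : Fin d → ℝ) : ℝ :=
  ∑ i, ℓ x i * P i

/-- Variance `Var_P(ℓ(x, ξ))` of the loss under `P`. -/
noncomputable def varLoss {X : Type*} {d : ℕ} (ℓ : X → Fin d → ℝ) (x : X)
    (P : Fin d → ℝ) : ℝ :=
  (∑ i, ℓ x i ^ 2 * P i) - cost ℓ x P ^ 2

/-- Empirical distribution `P̂_T` of the `T` samples `ω`. -/
noncomputable def empDist {d T : ℕ} (ω : Fin T → Fin d) : Fin d → ℝ :=
  fun i => ((Finset.univ.filter (fun t => ω t = i)).card : ℝ) / (T : ℝ)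

open Classical in
/-- `ℙ^∞(A)`: the probability, under i.i.d. sampling from `P`, of an event `A`
depending on the first `T` samples. -/
noncomputable def probT {d : ℕ} (P : Fin d → ℝ) (T : ℕ)
    (A : (Fin T → Fin d) → Prop) : ℝ :=
  ∑ ω : Fin T → Fin d, if A ω then ∏ t, P (ω t) else 0

/-- Regular predictors (the class `𝒞`): uniformly bounded, equicontinuous,
differentiable in the distribution argument (in the Fréchet sense along the simplex),
with uniformly bounded and equicontinuous derivatives. -/
structure IsRegularPredictor {X : Type*} [MetricSpace X] (d : ℕ)
    (chat : X → (Fin d → ℝ) → ℕ → ℝ) : Prop where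
  unifBounded : ∃ K : ℝ, ∀ (T : ℕ) (x : X), ∀ P ∈ simplex d, |chat x P T| ≤ K
  equicontinuous : ∀ (x : X), ∀ P ∈ simplex d, ∀ ε > (0 : ℝ), ∃ δ > (0 : ℝ),
    ∀ (T : ℕ) (x' : X), ∀ P' ∈ simplex d,
      dist x x' < δ → dist P P' < δ → |chat x P T - chat x' P' T| < ε
  differentiableDeriv : ∃ D : X → (Fin d → ℝ) → ℕ → ((Fin d → ℝ) →L[ℝ] ℝ),
    (∀ (T : ℕ) (x : X), ∀ P ∈ simplex d,
      HasFDerivWithinAt (fun Q => chat x Q T) (D x P T) (simplex d) P) ∧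
    (∃ K : ℝ, ∀ (T : ℕ) (x : X), ∀ P ∈ simplex d, ‖D x P T‖ ≤ K) ∧
    (∀ (x : X), ∀ P ∈ simplex d, ∀ ε > (0 : ℝ), ∃ δ > (0 : ℝ),
      ∀ (T : ℕ) (x' : X), ∀ P' ∈ simplex d,
        dist x x' < δ → dist P P' < δ → ‖D x P T - D x' P' T‖ < ε)

/-- The out-of-sample guarantee at speed `(a_T)`:
`limsup_{T→∞} (1/a_T) · log ℙ^∞( c(x,P) > ĉ(x, P̂_T, T) ) ≤ -1`
for every `x ∈ 𝒳` and `P ∈ 𝒫°`, stated in the equivalent ε-eventual form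
`ℙ^∞(disappointment) ≤ exp((-1+ε) a_T)` eventually (which in particular permits a
disappointment probability equal to zero). -/
def OOSGuarantee {X : Type*} {d : ℕ} (ℓ : X → Fin d → ℝ) (a : ℕ → ℝ)
    (chat : X → (Fin d → ℝ) → ℕ → ℝ) : Prop :=
  ∀ (x : X), ∀ P ∈ simplexInt d, ∀ ε > (0 : ℝ), ∀ᶠ T : ℕ in atTop,
    probT P T (fun ω => cost ℓ x P > chat x (empDist ω) T) ≤
      Real.exp ((-1 + ε) * a T)

/-- The prediction error `|ĉ(x,P,T) - c(x,P)|`. -/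
noncomputable def predErr {X : Type*} {d : ℕ} (ℓ : X → Fin d → ℝ)
    (chat : X → (Fin d → ℝ) → ℕ → ℝ) (x : X) (P : Fin d → ℝ) (T : ℕ) : ℝ :=
  |chat x P T - cost ℓ x P|

open Classical in
/-- Ratio with the convention `0 / 0 = 1`. -/
noncomputable def ratio (u v : ℝ) : ℝ := if u = 0 ∧ v = 0 then 1 else u / v

/-- The partial order `⪯_𝒞` on predictors:
`limsup_{T→∞} |ĉ₁(x,P,T) - c(x,P)| / |ĉ₂(x,P,T) - c(x,P)| ≤ 1`
(convention `0/0 = 1`) for every `x ∈ 𝒳`, `P ∈ 𝒫°`, stated in the equivalent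
ε-eventual form (the ratio is a nonnegative sequence). -/
def PredOrder {X : Type*} {d : ℕ} (ℓ : X → Fin d → ℝ)
    (chat1 chat2 : X → (Fin d → ℝ) → ℕ → ℝ) : Prop :=
  ∀ (x : X), ∀ P ∈ simplexInt d, ∀ ε > (0 : ℝ), ∀ᶠ T : ℕ in atTop,
    ratio (predErr ℓ chat1 x P T) (predErr ℓ chat2 x P T) ≤ 1 + ε

/-- The equivalence `≡` on predictors: `|ĉ₁ - c|` and `|ĉ₂ - c|` are asymptotically
equivalent as `T → ∞` for every `x ∈ 𝒳` and `P ∈ 𝒫°`. -/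
def PredEquiv {X : Type*} {d : ℕ} (ℓ : X → Fin d → ℝ)
    (chat1 chat2 : X → (Fin d → ℝ) → ℕ → ℝ) : Prop :=
  ∀ (x : X), ∀ P ∈ simplexInt d,
    (fun T : ℕ => predErr ℓ chat1 x P T) ~[atTop]
      (fun T : ℕ => predErr ℓ chat2 x P T)

/-- A single term `q · log(q/p)` of the relative entropy, with the conventions
`0 · log(0/p) = 0` and `q · log(q/0) = ∞` for `q > 0`. -/
noncomputable def klTerm (q p : ℝ) : EReal :=
  if q = 0 then 0 else if p = 0 then ⊤ else ((q * Real.log (q / p) : ℝ) : EReal)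

/-- The relative entropy (KL divergence) `I(Q, P')`. -/
noncomputable def relEnt {d : ℕ} (Q P' : Fin d → ℝ) : EReal :=
  ∑ i, klTerm (Q i) (P' i)

/-- The KL-DRO predictor with radius `r`:
`ĉ_KL(x,P) = sup { c(x,P') : P' ∈ 𝒫, I(P,P') ≤ r }`. -/
noncomputable def cKL {X : Type*} {d : ℕ} (ℓ : X → Fin d → ℝ) (r : ℝ)
    (x : X) (P : Fin d → ℝ) : ℝ :=
  sSup {y | ∃ P' ∈ simplex d, relEnt P P' ≤ (r : EReal) ∧ y = cost ℓ x P'}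

/-- The robust predictor `ĉ_R(x) = max_{i ∈ Σ} ℓ(x,i)`. -/
noncomputable def cR {X : Type*} {d : ℕ} (ℓ : X → Fin d → ℝ) (x : X) : ℝ :=
  ⨆ i : Fin d, ℓ x i

/-- The sample variance penalization (SVP) predictor
`ĉ_V(x,P,T) = c(x,P) + √((2 a_T / T) · Var_P(ℓ(x,ξ)))`. -/
noncomputable def cV {X : Type*} {d : ℕ} (a : ℕ → ℝ) (ℓ : X → Fin d → ℝ)
    (x : X) (P : Fin d → ℝ) (T : ℕ) : ℝ :=
  cost ℓ x P + Real.sqrt ((2 * a T / (T : ℝ)) * varLoss ℓ x P)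

/-- The squared local ellipsoid norm `‖Δ‖_P² = (1/2) ∑ i, Δ_i² / P(i)`. -/
noncomputable def ellNormSq {d : ℕ} (P Δ : Fin d → ℝ) : ℝ :=
  (1 / 2) * ∑ i, Δ i ^ 2 / P i

/-- The optimal cost `c*(P) = min_{x ∈ 𝒳} c(x,P)`. -/
noncomputable def cstar {X : Type*} {d : ℕ} (ℓ : X → Fin d → ℝ)
    (P : Fin d → ℝ) : ℝ :=
  sInf (Set.range fun x : X => cost ℓ x P)

/-- The optimal predicted cost `ĉ*(P,T) = min_{x ∈ 𝒳} ĉ(x,P,T)`. -/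
noncomputable def chatStar {X : Type*} {d : ℕ} (chat : X → (Fin d → ℝ) → ℕ → ℝ)
    (P : Fin d → ℝ) (T : ℕ) : ℝ :=
  sInf (Set.range fun x : X => chat x P T)

/-- `x̂` is a prescriptor associated with the predictor `ĉ`:
`x̂_T(P) ∈ argmin_{x ∈ 𝒳} ĉ(x,P,T)` for all `P ∈ 𝒫` and `T`. -/
def IsPrescriptor {X : Type*} {d : ℕ} (chat : X → (Fin d → ℝ) → ℕ → ℝ)
    (xhat : ℕ → (Fin d → ℝ) → X) : Prop :=
  ∀ (T : ℕ), ∀ P ∈ simplex d, ∀ x : X, chat (xhat T P) P T ≤ chat x P T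

/-- The prescription out-of-sample guarantee at speed `(a_T)`:
`limsup_{T→∞} (1/a_T) · log ℙ^∞( c(x̂_T(P̂_T), P) > ĉ*(P̂_T, T) ) ≤ -1`
for every `P ∈ 𝒫°`, stated in the equivalent ε-eventual form. -/
def PrescOOSGuarantee {X : Type*} {d : ℕ} (ℓ : X → Fin d → ℝ) (a : ℕ → ℝ)
    (chat : X → (Fin d → ℝ) → ℕ → ℝ) (xhat : ℕ → (Fin d → ℝ) → X) : Prop :=
  ∀ P ∈ simplexInt d, ∀ ε > (0 : ℝ), ∀ᶠ T : ℕ in atTop,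
    probT P T (fun ω =>
        cost ℓ (xhat T (empDist ω)) P > chatStar chat (empDist ω) T) ≤
      Real.exp ((-1 + ε) * a T)

/-- The partial order `⪯_X̂` on prescriptors:
`limsup_{T→∞} |ĉ₁*(P,T) - c*(P)| / |ĉ₂*(P,T) - c*(P)| ≤ 1` (convention `0/0 = 1`)
for every `P ∈ 𝒫°`, stated in the equivalent ε-eventual form. -/
def PrescOrder {X : Type*} {d : ℕ} (ℓ : X → Fin d → ℝ)
    (chat1 chat2 : X → (Fin d → ℝ) → ℕ → ℝ) : Prop :=
  ∀ P ∈ simplexInt d, ∀ ε > (0 : ℝ), ∀ᶠ T : ℕ in atTop,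
    ratio |chatStar chat1 P T - cstar ℓ P| |chatStar chat2 P T - cstar ℓ P| ≤ 1 + ε

/-- The equivalence `≡_X̂` on prescriptors: `|ĉ₁* - c*|` and `|ĉ₂* - c*|` are
asymptotically equivalent as `T → ∞` for every `P ∈ 𝒫°`. -/
def PrescEquiv {X : Type*} {d : ℕ} (ℓ : X → Fin d → ℝ)
    (chat1 chat2 : X → (Fin d → ℝ) → ℕ → ℝ) : Prop :=
  ∀ P ∈ simplexInt d,
    (fun T : ℕ => |chatStar chat1 P T - cstar ℓ P|) ~[atTop]
      (fun T : ℕ => |chatStar chat2 P T - cstar ℓ P|)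

open Matrix in
lemma dot_symm {d : ℕ} (A : Matrix (Fin d) (Fin d) ℝ) (hA : A.IsHermitian)
    (x y : Fin d → ℝ) : x ⬝ᵥ A *ᵥ y = y ⬝ᵥ A *ᵥ x := by
  rw [dotProduct_mulVec, dotProduct_comm, ← mulVec_transpose,
    ← conjTranspose_eq_transpose_of_trivial, hA.eq]

open Matrix in
lemma cs_ineq {d : ℕ} (A : Matrix (Fin d) (Fin d) ℝ) (hA : A.PosDef) (x y : Fin d → ℝ) :
    (x ⬝ᵥ A *ᵥ y) ^ 2 ≤ (x ⬝ᵥ A *ᵥ x) * (y ⬝ᵥ A *ᵥ y) := by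
  have key : ∀ t : ℝ, 0 ≤ (y ⬝ᵥ A *ᵥ y) * (t * t) + (2 * (x ⬝ᵥ A *ᵥ y)) * t
      + (x ⬝ᵥ A *ᵥ x) := by
    intro t
    have h0 := hA.posSemidef.re_dotProduct_nonneg (x + t • y)
    simp only [RCLike.re_to_real, star_trivial] at h0
    have : (x + t • y) ⬝ᵥ A *ᵥ (x + t • y)
        = (y ⬝ᵥ A *ᵥ y) * (t * t) + (2 * (x ⬝ᵥ A *ᵥ y)) * t + (x ⬝ᵥ A *ᵥ x) := by
      simp only [mulVec_add, mulVec_smul, add_dotProduct, dotProduct_add,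
        smul_dotProduct, dotProduct_smul, smul_eq_mul,
        dot_symm A hA.isHermitian y x]
      ring
    linarith [this ▸ h0]
  have hd := discrim_le_zero key
  rw [discrim] at hd
  nlinarith

open Matrix in
lemma rayleigh {d : ℕ} [Nonempty (Fin d)] (A : Matrix (Fin d) (Fin d) ℝ) (hA : A.IsHermitian)
    (x : Fin d → ℝ) :
    (⨅ i, hA.eigenvalues i) * (x ⬝ᵥ x) ≤ x ⬝ᵥ A *ᵥ x := by
  classical
  set U : Matrix (Fin d) (Fin d) ℝ := (hA.eigenvectorUnitary : Matrix (Fin d) (Fin d) ℝ) with hU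
  set y : Fin d → ℝ := star U *ᵥ x with hy
  have hdot : ∀ z : Fin d → ℝ, x ⬝ᵥ U *ᵥ z = y ⬝ᵥ z := by
    intro z
    rw [dotProduct_mulVec, hy, ← mulVec_transpose, ← conjTranspose_eq_transpose_of_trivial]
    rfl
  have hxAx : x ⬝ᵥ A *ᵥ x = ∑ i, hA.eigenvalues i * (y i) ^ 2 := by
    conv_lhs => rw [hA.spectral_theorem, Unitary.conjStarAlgAut_apply]
    rw [← mulVec_mulVec, ← mulVec_mulVec, hdot]
    simp only [dotProduct, mulVec_diagonal, Function.comp_apply, RCLike.ofReal_real_eq_id,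
      id_eq]
    exact Finset.sum_congr rfl fun i _ => by ring
  have hxx : x ⬝ᵥ x = ∑ i, (y i) ^ 2 := by
    have h1 : y ⬝ᵥ y = x ⬝ᵥ x := by
      rw [hy, dotProduct_mulVec, ← mulVec_transpose, ← conjTranspose_eq_transpose_of_trivial,
        ← star_eq_conjTranspose, star_star, mulVec_mulVec, Matrix.mem_unitaryGroup_iff.mp hA.eigenvectorUnitary.2, one_mulVec]
    rw [← h1]
    simp [dotProduct, sq]
  rw [hxAx, hxx, Finset.mul_sum]
  refine Finset.sum_le_sum fun i _ => ?_
  exact mul_le_mul_of_nonneg_right (ciInf_le (Set.Finite.bddBelow (Set.finite_range _)) i)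
    (sq_nonneg _)

open Matrix in
/-- Linear optimization over the intersection of an ellipsoid and the simplex:
if `A` is symmetric positive definite, `√α < √λ_min(A) · min_i min(P(i), 1-P(i))`,
`α > 0`, and `l` is not a scalar multiple of `e = (1,…,1)ᵀ`, then
`sup { lᵀP' : P' ∈ 𝒫, (P'-P)ᵀA(P'-P) ≤ α }
  = lᵀ(P + √(α/γ)·(A⁻¹l - (eᵀA⁻¹l / eᵀA⁻¹e)·A⁻¹e))`
with `γ = lᵀA⁻¹l - (eᵀA⁻¹l)²/(eᵀA⁻¹e)`. -/
theorem stmt_19 {d : ℕ} (P : Fin d → ℝ) (hP : P ∈ simplexInt d)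
    (A : Matrix (Fin d) (Fin d) ℝ) (hA : A.PosDef)
    (l : Fin d → ℝ) (hl : ¬∃ t : ℝ, l = fun _ => t)
    (α : ℝ) (hα : 0 < α)
    (hsmall : Real.sqrt α <
      Real.sqrt (⨅ i, hA.isHermitian.eigenvalues i) * ⨅ i, min (P i) (1 - P i)) :
    ∀ e : Fin d → ℝ, e = (fun _ => (1 : ℝ)) →
      ∀ γ : ℝ,
        γ = l ⬝ᵥ A⁻¹ *ᵥ l - (e ⬝ᵥ A⁻¹ *ᵥ l) ^ 2 / (e ⬝ᵥ A⁻¹ *ᵥ e) →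
          sSup {y | ∃ P' ∈ simplex d,
              (P' - P) ⬝ᵥ A *ᵥ (P' - P) ≤ α ∧ y = l ⬝ᵥ P'} =
            l ⬝ᵥ (P + Real.sqrt (α / γ) •
              (A⁻¹ *ᵥ l - ((e ⬝ᵥ A⁻¹ *ᵥ l) / (e ⬝ᵥ A⁻¹ *ᵥ e)) • (A⁻¹ *ᵥ e))) := by
  obtain ⟨hPpos, hPsum⟩ := hP
  have hP : (∀ i, 0 < P i) ∧ ∑ i, P i = 1 := ⟨hPpos, hPsum⟩
  simp only [simplex, Set.mem_setOf_eq]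
  classical
  intro e he γ hγdef
  -- basic setup
  have hd : Nonempty (Fin d) := by
    by_contra h
    exact hl ⟨0, funext fun i => absurd ⟨i⟩ h⟩
  have hdetA : IsUnit A.det := hA.det_pos.ne'.isUnit
  have hAB : A * A⁻¹ = 1 := A.mul_nonsing_inv hdetA
  have hBpd : A⁻¹.PosDef := hA.inv
  have hBH := hBpd.isHermitian
  have hAH := hA.isHermitian
  have hpdB : ∀ x : Fin d → ℝ, x ≠ 0 → 0 < x ⬝ᵥ A⁻¹ *ᵥ x := by
    intro x hx
    have := hBpd.re_dotProduct_pos hx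
    simpa using this
  have he0 : e ≠ 0 := by
    rw [he]; intro h
    have := congrFun h (Classical.arbitrary (Fin d))
    norm_num at this
  set q : ℝ := e ⬝ᵥ A⁻¹ *ᵥ e with hq_def
  set s : ℝ := e ⬝ᵥ A⁻¹ *ᵥ l with hs_def
  have hq : 0 < q := hpdB e he0
  set β : ℝ := s / q with hβ_def
  set m : Fin d → ℝ := l - β • e with hm_def
  set w : Fin d → ℝ := A⁻¹ *ᵥ l - β • (A⁻¹ *ᵥ e) with hw_def
  have hwm : w = A⁻¹ *ᵥ m := by
    rw [hw_def, hm_def, mulVec_sub, mulVec_smul]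
  have hsym_le : l ⬝ᵥ A⁻¹ *ᵥ e = s := dot_symm A⁻¹ hBH l e |>.trans rfl
  set L : ℝ := l ⬝ᵥ A⁻¹ *ᵥ l with hL_def
  have hm0 : m ≠ 0 := by
    intro h
    apply hl
    refine ⟨β, funext fun i => ?_⟩
    have := congrFun h i
    simp [hm_def, he] at this ⊢
    linarith [this]
  have hew : e ⬝ᵥ w = 0 := by
    rw [hw_def, dotProduct_sub, dotProduct_smul]
    simp only [smul_eq_mul, ← hs_def, ← hq_def, hβ_def]
    rw [div_mul_cancel₀ _ hq.ne', sub_self]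
  have hlw : l ⬝ᵥ w = γ := by
    rw [hw_def, dotProduct_sub, dotProduct_smul, hsym_le]
    simp only [smul_eq_mul, ← hL_def, hβ_def, hγdef]
    rw [div_mul_eq_mul_div, ← sq]
  have hmw : m ⬝ᵥ w = γ := by
    rw [hm_def, sub_dotProduct, smul_dotProduct]
    simp only [smul_eq_mul]
    rw [hlw, hew, mul_zero, sub_zero]
  have hγm : γ = m ⬝ᵥ A⁻¹ *ᵥ m := by
    rw [← hwm]; exact hmw.symm
  have hγ : 0 < γ := hγm ▸ hpdB m hm0
  have hAw : A *ᵥ w = m := by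
    rw [hwm, mulVec_mulVec, hAB, one_mulVec]
  have hwAw : w ⬝ᵥ A *ᵥ w = γ := by
    rw [hAw, dotProduct_comm]; exact hmw
  -- the candidate optimizer
  set c : ℝ := Real.sqrt (α / γ) with hc_def
  set z : Fin d → ℝ := c • w with hz_def
  have hc0 : 0 ≤ c := Real.sqrt_nonneg _
  have hc2 : c ^ 2 = α / γ := Real.sq_sqrt (div_nonneg hα.le hγ.le)
  have hzAz : z ⬝ᵥ A *ᵥ z = α := by
    rw [hz_def, mulVec_smul, smul_dotProduct, dotProduct_smul, hwAw]
    simp only [smul_eq_mul, ← mul_assoc, ← sq, hc2]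
    exact div_mul_cancel₀ α hγ.ne'
  have hcγ : c * γ = Real.sqrt (γ * α) := by
    have h1 : (c * γ) ^ 2 = γ * α := by
      rw [mul_pow, hc2]; field_simp
    rw [← h1, Real.sqrt_sq (by positivity)]
  have hval : l ⬝ᵥ (P + c • w) = l ⬝ᵥ P + c * γ := by
    rw [dotProduct_add, dotProduct_smul, hlw, smul_eq_mul]
  -- eigenvalue bounds
  set lam : ℝ := ⨅ i, hA.isHermitian.eigenvalues i with hlam_def
  have hlam : 0 < lam := by
    obtain ⟨i0, hi0⟩ := exists_eq_ciInf_of_finite (f := fun i => hA.isHermitian.eigenvalues i)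
    rw [hlam_def, ← hi0]
    exact hA.eigenvalues_pos i0
  set M : ℝ := ⨅ i, min (P i) (1 - P i) with hM_def
  have hσ : 0 < Real.sqrt lam := Real.sqrt_pos.mpr hlam
  -- nonnegativity of the optimizer
  have hznn : ∀ i, 0 ≤ P i + z i := by
    intro i
    have hz2 : lam * (z ⬝ᵥ z) ≤ α := (rayleigh A hA.isHermitian z).trans (le_of_eq hzAz)
    have hzi2 : z i ^ 2 ≤ z ⬝ᵥ z := by
      have : z ⬝ᵥ z = ∑ j, z j ^ 2 := by
        simp [dotProduct, sq]
      rw [this]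
      exact Finset.single_le_sum (fun j _ => sq_nonneg (z j)) (Finset.mem_univ i)
    have h3 : lam * z i ^ 2 ≤ α := le_trans (by nlinarith) hz2
    have h4 : Real.sqrt lam * |z i| ≤ Real.sqrt α := by
      rw [show Real.sqrt lam * |z i| = Real.sqrt (lam * z i ^ 2) by
        rw [Real.sqrt_mul hlam.le, Real.sqrt_sq_eq_abs]]
      exact Real.sqrt_le_sqrt h3
    have h5 : Real.sqrt lam * |z i| < Real.sqrt lam * M := lt_of_le_of_lt h4 hsmall
    have h6 : |z i| < M := lt_of_mul_lt_mul_left h5 hσ.le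
    have h7 : M ≤ min (P i) (1 - P i) :=
      ciInf_le (Set.Finite.bddBelow (Set.finite_range _)) i
    have h8 : |z i| < P i := lt_of_lt_of_le h6 (h7.trans (min_le_left _ _))
    have := neg_abs_le (z i)
    linarith
  have hez : e ⬝ᵥ z = 0 := by
    rw [hz_def, dotProduct_smul, hew, smul_zero]
  have hzsum : ∑ i, z i = 0 := by
    rw [← hez, he]
    simp [dotProduct]
  have hQsum : ∑ i, (P i + z i) = 1 := by
    rw [Finset.sum_add_distrib, hP.2, hzsum, add_zero]
  -- the optimizer is feasible
  have hmem : l ⬝ᵥ (P + c • w) ∈ {y | ∃ P' ∈ {Q : Fin d → ℝ | (∀ i, 0 ≤ Q i) ∧ ∑ i, Q i = 1},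
      (P' - P) ⬝ᵥ A *ᵥ (P' - P) ≤ α ∧ y = l ⬝ᵥ P'} := by
    refine ⟨P + c • w, ⟨fun i => hznn i, hQsum⟩, ?_, rfl⟩
    rw [add_sub_cancel_left]
    exact le_of_eq hzAz
  -- upper bound
  have hub : ∀ y ∈ {y | ∃ P' ∈ {Q : Fin d → ℝ | (∀ i, 0 ≤ Q i) ∧ ∑ i, Q i = 1},
      (P' - P) ⬝ᵥ A *ᵥ (P' - P) ≤ α ∧ y = l ⬝ᵥ P'}, y ≤ l ⬝ᵥ (P + c • w) := by
    rintro y ⟨P', hP'mem, hball, rfl⟩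
    have heΔ : e ⬝ᵥ (P' - P) = 0 := by
      rw [he]
      simp [dotProduct, Finset.sum_sub_distrib, hP.2, hP'mem.2]
    have hmΔ : m ⬝ᵥ (P' - P) = w ⬝ᵥ A *ᵥ (P' - P) := by
      rw [← hAw, dotProduct_comm, dot_symm A hA.isHermitian]
    have hlΔ : l ⬝ᵥ (P' - P) = w ⬝ᵥ A *ᵥ (P' - P) := by
      have : l ⬝ᵥ (P' - P) = m ⬝ᵥ (P' - P) + β * (e ⬝ᵥ (P' - P)) := by
        rw [hm_def, sub_dotProduct, smul_dotProduct, smul_eq_mul]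
        ring
      rw [this, heΔ, mul_zero, add_zero, hmΔ]
    have hcs : (w ⬝ᵥ A *ᵥ (P' - P)) ^ 2 ≤ γ * α := by
      calc (w ⬝ᵥ A *ᵥ (P' - P)) ^ 2
          ≤ (w ⬝ᵥ A *ᵥ w) * ((P' - P) ⬝ᵥ A *ᵥ (P' - P)) := cs_ineq A hA w _
        _ ≤ γ * α := by
            rw [hwAw]
            exact mul_le_mul_of_nonneg_left hball hγ.le
    have hle : w ⬝ᵥ A *ᵥ (P' - P) ≤ Real.sqrt (γ * α) := by
      rcases le_or_gt (w ⬝ᵥ A *ᵥ (P' - P)) 0 with h | h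
      · exact h.trans (Real.sqrt_nonneg _)
      · rw [show w ⬝ᵥ A *ᵥ (P' - P) = Real.sqrt ((w ⬝ᵥ A *ᵥ (P' - P)) ^ 2) by
          rw [Real.sqrt_sq h.le]]
        exact Real.sqrt_le_sqrt hcs
    have hsubdot : l ⬝ᵥ (P' - P) = l ⬝ᵥ P' - l ⬝ᵥ P := dotProduct_sub l P' P
    rw [hval]
    rw [hsubdot] at hlΔ
    rw [← hcγ] at hle
    linarith
  exact IsGreatest.csSup_eq ⟨hmem, hub⟩


end DDO
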